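/- Let R be a commutative Noetherian ring, k ≥ 1, and n₀, n₁, …, n_k ∈ ℕ. For i = 0, …, k−1 let D_i be an n_{i+1} × n_i matrix over R, and suppose D_{i+1}·D_i = 0 for all 0 ≤ i ≤ k−2, so that the maps v ↦ D_i·v form a bounded complex 0 → R^{n₀} → R^{n₁} → ⋯ → R^{n_k} → 0 of finite free R-modules. Suppose that for every maximal ideal 𝔪 of R, the complex of R/𝔪-vector spaces obtained by reducing each D_i modulo 𝔪 entrywise is acyclic, i.e. exact at every spot: the first reduced map is injective, at each intermediate spot the range of the incoming reduced map equals the kernel of the outgoing one, and the last reduced map is surjective. Then the original complex over R is acyclic in the same sense: v ↦ D₀·v is injective, range(v ↦ D_{i-1}·v) = ker(v ↦ D_i·v) at each intermediate spot, and v ↦ D_{k-1}·v is surjective. -/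

import Mathlib

open Matrix LinearMap

section Helpers

variable {R S : Type*} [CommRing R] [CommRing S]

lemma mapMulVec {ι₁ ι₂ : Type*} [Fintype ι₂] (σ : R →+* S)
    (M : Matrix ι₁ ι₂ R) (v : ι₂ → R) :
    (M.map σ).mulVec (σ ∘ v) = σ ∘ (M.mulVec v) := by
  funext i
  exact (RingHom.map_mulVec σ M v i).symm

lemma exists_comp_eq {ι : Type*} {σ : R →+* S} (hσ : Function.Surjective σ)
    (x : ι → S) : ∃ y : ι → R, σ ∘ y = x :=
  ⟨fun i => (hσ (x i)).choose, funext fun i => (hσ (x i)).choose_spec⟩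

lemma exists_matrix_map_eq {ι₁ ι₂ : Type*} {σ : R →+* S} (hσ : Function.Surjective σ)
    (M : Matrix ι₁ ι₂ S) : ∃ N : Matrix ι₁ ι₂ R, N.map σ = M := by
  refine ⟨Matrix.of fun i j => (hσ (M i j)).choose, ?_⟩
  ext i j
  exact (hσ (M i j)).choose_spec

/-- transfer of injectivity along a bijective ring hom -/
lemma injective_map_of_bijective {σ : R →+* S} (hσ : Function.Bijective σ)
    {ι₁ ι₂ : Type*} [Fintype ι₂] {M : Matrix ι₁ ι₂ R}
    (h : Function.Injective M.mulVecLin) :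
    Function.Injective (M.map σ).mulVecLin := by
  intro x y hxy
  obtain ⟨x', rfl⟩ := exists_comp_eq hσ.surjective x
  obtain ⟨y', rfl⟩ := exists_comp_eq hσ.surjective y
  simp only [mulVecLin_apply, mapMulVec] at hxy
  have : M.mulVec x' = M.mulVec y' := by
    funext i
    exact hσ.injective (congrFun hxy i)
  have hx : x' = y' := h (by simpa only [mulVecLin_apply] using this)
  rw [hx]

/-- transfer of surjectivity along a bijective ring hom -/
lemma surjective_map_of_bijective {σ : R →+* S} (hσ : Function.Bijective σ)
    {ι₁ ι₂ : Type*} [Fintype ι₂] {M : Matrix ι₁ ι₂ R}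
    (h : Function.Surjective M.mulVecLin) :
    Function.Surjective (M.map σ).mulVecLin := by
  intro y
  obtain ⟨y', rfl⟩ := exists_comp_eq hσ.surjective y
  obtain ⟨x, hx⟩ := h y'
  exact ⟨σ ∘ x, by simp only [mulVecLin_apply] at hx ⊢; rw [mapMulVec, hx]⟩

/-- transfer of exactness along a bijective ring hom -/
lemma range_eq_ker_map_of_bijective {σ : R →+* S} (hσ : Function.Bijective σ)
    {ι₁ ι₂ ι₃ : Type*} [Fintype ι₁] [Fintype ι₂]
    {A : Matrix ι₂ ι₁ R} {B : Matrix ι₃ ι₂ R}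
    (h : LinearMap.range A.mulVecLin = LinearMap.ker B.mulVecLin) :
    LinearMap.range (A.map σ).mulVecLin = LinearMap.ker (B.map σ).mulVecLin := by
  ext v
  obtain ⟨w, rfl⟩ := exists_comp_eq hσ.surjective v
  simp only [LinearMap.mem_range, LinearMap.mem_ker, mulVecLin_apply]
  constructor
  · rintro ⟨x, hx⟩
    obtain ⟨x', rfl⟩ := exists_comp_eq hσ.surjective x
    rw [mapMulVec] at hx
    have hw : A.mulVec x' = w := funext fun i => hσ.injective (congrFun hx i)
    have : w ∈ LinearMap.ker B.mulVecLin := h ▸ ⟨x', by simp [mulVecLin_apply, hw]⟩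
    rw [LinearMap.mem_ker, mulVecLin_apply] at this
    rw [mapMulVec, this]
    funext i
    simp
  · intro hB
    have : B.mulVec w = 0 := by
      funext i
      apply hσ.injective
      have := congrFun (mapMulVec σ B w) i
      rw [hB] at this
      simpa using this.symm
    have hw : w ∈ LinearMap.range A.mulVecLin := by
      rw [h, LinearMap.mem_ker, mulVecLin_apply]
      exact this
    obtain ⟨x, hx⟩ := hw
    rw [mulVecLin_apply] at hx
    exact ⟨σ ∘ x, by rw [mapMulVec, hx]⟩

lemma mem_smul_top_of_coords {ι : Type*} [Fintype ι] [DecidableEq ι]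
    (I : Ideal R) (v : ι → R) (hv : ∀ i, v i ∈ I) :
    v ∈ I • (⊤ : Submodule R (ι → R)) := by
  have hv' : v = ∑ i, (v i) • (Pi.single i 1 : ι → R) := by
    funext j
    simp [Pi.single_apply, Finset.sum_apply]
  rw [hv']
  exact Submodule.sum_mem _ fun i _ =>
    Submodule.smul_mem_smul (hv i) Submodule.mem_top

end Helpers

section LocalRing

variable {R : Type*} [CommRing R] [IsLocalRing R]

local notation "κ" => IsLocalRing.ResidueField R
local notation "res" => IsLocalRing.residue R

lemma isUnit_of_residue_ne_zero {r : R} (h : res r ≠ 0) : IsUnit r := by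
  by_contra hr
  exact h (Ideal.Quotient.eq_zero_iff_mem.mpr ((IsLocalRing.mem_maximalIdeal r).mpr hr))

/-- Nakayama: surjectivity mod the maximal ideal implies surjectivity, for matrices. -/
lemma surjective_of_residue_surjective {ι₁ ι₂ : Type*} [Fintype ι₁] [Fintype ι₂]
    [DecidableEq ι₁] (M : Matrix ι₁ ι₂ R)
    (h : Function.Surjective (M.map res).mulVecLin) :
    Function.Surjective M.mulVecLin := by
  rw [← LinearMap.range_eq_top]
  have htop : (⊤ : Submodule R (ι₁ → R)) ≤
      LinearMap.range M.mulVecLin ⊔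
        (IsLocalRing.maximalIdeal R) • (⊤ : Submodule R (ι₁ → R)) := by
    intro v _
    obtain ⟨xb, hxb⟩ := h (res ∘ v)
    obtain ⟨x, rfl⟩ := exists_comp_eq IsLocalRing.residue_surjective xb
    rw [mulVecLin_apply, mapMulVec] at hxb
    have hcoord : ∀ i, (v - M.mulVec x) i ∈ IsLocalRing.maximalIdeal R := by
      intro i
      have : res ((M.mulVec x) i) = res (v i) := congrFun hxb i
      rw [← Ideal.Quotient.eq_zero_iff_mem]
      simp only [Pi.sub_apply, map_sub]
      rw [sub_eq_zero]
      exact this.symm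
    have : v = M.mulVec x + (v - M.mulVec x) := by ring
    rw [this]
    exact Submodule.add_mem_sup ⟨x, rfl⟩
      (mem_smul_top_of_coords _ _ hcoord)
  have hle : (⊤ : Submodule R (ι₁ → R)) ≤ LinearMap.range M.mulVecLin := by
    apply Submodule.le_of_le_smul_of_le_jacobson_bot (Module.finite_def.mp inferInstance)
    · rw [IsLocalRing.jacobson_eq_maximalIdeal ⊥ bot_ne_top]
    · exact htop
  exact top_le_iff.mp hle

/-- Over a local ring, a matrix whose reduction is injective has a left inverse. -/
lemma exists_left_inverse_of_residue_injective {ι₁ ι₂ : Type*} [Fintype ι₁] [Fintype ι₂]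
    [DecidableEq ι₁] [DecidableEq ι₂] (A : Matrix ι₁ ι₂ R)
    (h : Function.Injective (A.map res).mulVecLin) :
    ∃ L : Matrix ι₂ ι₁ R, L * A = 1 := by
  -- left inverse over the residue field
  obtain ⟨g, hg⟩ := LinearMap.exists_leftInverse_of_injective
    (A.map res).mulVecLin (LinearMap.ker_eq_bot.mpr h)
  set Lb : Matrix ι₂ ι₁ κ := LinearMap.toMatrix' g with hLb
  have hLbA : Lb * (A.map res) = 1 := by
    apply Matrix.toLin'.injective
    rw [Matrix.toLin'_mul, Matrix.toLin'_one]
    rw [hLb, Matrix.toLin'_toMatrix']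
    rw [Matrix.toLin'_apply']
    exact hg
  obtain ⟨L₀, hL₀⟩ := exists_matrix_map_eq IsLocalRing.residue_surjective Lb
  have hmap : (L₀ * A).map res = 1 := by
    rw [Matrix.map_mul, hL₀, hLbA]
  have hdet : IsUnit (L₀ * A).det := by
    apply isUnit_of_residue_ne_zero
    have : res (L₀ * A).det = ((L₀ * A).map res).det := RingHom.map_det _ _
    rw [this, hmap, Matrix.det_one]
    exact one_ne_zero
  refine ⟨(L₀ * A)⁻¹ * L₀, ?_⟩
  rw [Matrix.mul_assoc, Matrix.nonsing_inv_mul _ hdet]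

lemma injective_of_residue_injective {ι₁ ι₂ : Type*} [Fintype ι₁] [Fintype ι₂]
    [DecidableEq ι₁] [DecidableEq ι₂] (A : Matrix ι₁ ι₂ R)
    (h : Function.Injective (A.map res).mulVecLin) :
    ∀ x : ι₂ → R, A.mulVec x = 0 → x = 0 := by
  obtain ⟨L, hL⟩ := exists_left_inverse_of_residue_injective A h
  intro x hx
  have : (L * A).mulVec x = 0 := by
    rw [← Matrix.mulVec_mulVec, hx, Matrix.mulVec_zero]
  rwa [hL, Matrix.one_mulVec] at this

/-- Complement lemma: any matrix over a local ring can be complemented by finitely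
many columns so that together they span, with the extra columns independent mod 𝔪. -/
lemma exists_complement {ι₁ ι₂ : Type*} [Fintype ι₁] [Fintype ι₂]
    [DecidableEq ι₁] [DecidableEq ι₂] (A : Matrix ι₁ ι₂ R) :
    ∃ (m' : ℕ) (Q : Matrix ι₁ (Fin m') R),
      (∀ v : ι₁ → R, ∃ x y, v = A.mulVec x + Q.mulVec y) ∧
      (∀ (x : ι₂ → κ) (y : Fin m' → κ),
        (A.map res).mulVec x + (Q.map res).mulVec y = 0 → y = 0) := by
  classical
  set Ab : Matrix ι₁ ι₂ κ := A.map res with hAb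
  set W := (ι₁ → κ) ⧸ LinearMap.range Ab.mulVecLin with hW
  set π : (ι₁ → κ) →ₗ[κ] W := (LinearMap.range Ab.mulVecLin).mkQ with hπ
  set m' := Module.finrank κ W with hm'
  set b : Module.Basis (Fin m') κ W := Module.finBasis κ W with hb
  have hπsurj : Function.Surjective π := Submodule.mkQ_surjective _
  -- lift basis vectors
  choose c hc using fun j : Fin m' => hπsurj (b j)
  set Qb : Matrix ι₁ (Fin m') κ := Matrix.of (fun i j => c j i) with hQb
  obtain ⟨Q, hQ⟩ := exists_matrix_map_eq IsLocalRing.residue_surjective Qb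
  have hQres : ∀ y : Fin m' → κ, Qb.mulVec y = ∑ j, y j • c j := by
    intro y
    funext i
    simp only [Matrix.mulVec, dotProduct, Finset.sum_apply, Pi.smul_apply,
      smul_eq_mul, hQb, Matrix.of_apply]
    exact Finset.sum_congr rfl fun j _ => mul_comm _ _
  have hπQ : ∀ y : Fin m' → κ, π (Qb.mulVec y) = ∑ j, y j • b j := by
    intro y
    rw [hQres]
    rw [map_sum]
    exact Finset.sum_congr rfl fun j _ => by rw [_root_.map_smul, hc]
  have hkey2 : ∀ (x : ι₂ → κ) (y : Fin m' → κ),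
      Ab.mulVec x + Qb.mulVec y = 0 → y = 0 := by
    intro x y hxy
    have hzero : π (Ab.mulVec x) = 0 := by
      rw [hπ, Submodule.mkQ_apply, Submodule.Quotient.mk_eq_zero]
      exact ⟨x, rfl⟩
    have : π (Qb.mulVec y) = 0 := by
      have := congrArg π hxy
      rw [map_add, map_zero, hzero, zero_add] at this
      exact this
    rw [hπQ] at this
    have hli := Fintype.linearIndependent_iff.mp b.linearIndependent y this
    funext j
    exact hli j
  -- surjectivity of the combined matrix over κ
  have hsurjκ : Function.Surjective ((Matrix.fromCols A Q).map res).mulVecLin := by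
    have hcols : (Matrix.fromCols A Q).map res = Matrix.fromCols Ab Qb := by
      ext i j
      cases j with
      | inl j => simp [Matrix.fromCols, hAb]
      | inr j => simp [Matrix.fromCols, ← hQ]
    rw [hcols]
    intro v
    set y := b.repr (π v) with hy
    have hrepr : ∑ j, (y j) • b j = π v := by
      rw [hy]
      exact b.sum_repr (π v)
    have hmem : v - Qb.mulVec y ∈ LinearMap.range Ab.mulVecLin := by
      rw [← Submodule.Quotient.mk_eq_zero (LinearMap.range Ab.mulVecLin)]
      have : π (v - Qb.mulVec y) = 0 := by
        rw [map_sub, hπQ, hrepr, sub_self]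
      exact this
    obtain ⟨x, hx⟩ := hmem
    refine ⟨Sum.elim x y, ?_⟩
    rw [mulVecLin_apply, Matrix.fromCols_mulVec_sumElim]
    rw [mulVecLin_apply] at hx
    rw [hx]
    ring
  have hsurjR := surjective_of_residue_surjective _ hsurjκ
  refine ⟨m', Q, ?_, ?_⟩
  · intro v
    obtain ⟨w, hw⟩ := hsurjR v
    refine ⟨w ∘ Sum.inl, w ∘ Sum.inr, ?_⟩
    rw [mulVecLin_apply] at hw
    rw [← hw, ← Matrix.fromCols_mulVec_sumElim, Sum.elim_comp_inl_inr]
  · intro x y hxy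
    apply hkey2 x y
    rwa [hQ] at hxy

end LocalRing

section LocalMain

variable {R : Type*} [CommRing R] [IsLocalRing R]

local notation "κ" => IsLocalRing.ResidueField R
local notation "res" => IsLocalRing.residue R

/-- The main lemma over a local ring. -/
lemma local_acyclic (k : ℕ) (hk : 1 ≤ k) (n : ℕ → ℕ)
    (D : ∀ i : ℕ, Matrix (Fin (n (i + 1))) (Fin (n i)) R)
    (hcomp : ∀ i : ℕ, i + 1 < k → D (i + 1) * D i = 0)
    (hinj : Function.Injective ((D 0).map res).mulVecLin)
    (hmid : ∀ i : ℕ, i + 1 < k →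
      LinearMap.range ((D i).map res).mulVecLin =
        LinearMap.ker ((D (i + 1)).map res).mulVecLin)
    (hsurj : Function.Surjective ((D (k - 1)).map res).mulVecLin) :
    Function.Injective (D 0).mulVecLin ∧
      (∀ i : ℕ, i + 1 < k →
        LinearMap.range (D i).mulVecLin = LinearMap.ker (D (i + 1)).mulVecLin) ∧
      Function.Surjective (D (k - 1)).mulVecLin := by
  classical
  -- injectivity
  have hinjR : Function.Injective (D 0).mulVecLin := by
    rw [← LinearMap.ker_eq_bot, LinearMap.ker_eq_bot']
    intro x hx
    exact injective_of_residue_injective (D 0) hinj x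
      (by rwa [mulVecLin_apply] at hx)
  refine ⟨hinjR, ?_, surjective_of_residue_surjective _ hsurj⟩
  -- invariant
  set Inv : ℕ → Prop := fun i => ∃ (m : ℕ) (A : Matrix (Fin (n (i + 1))) (Fin m) R),
    LinearMap.range A.mulVecLin = LinearMap.range (D i).mulVecLin ∧
    Function.Injective ((A.map res).mulVecLin) ∧
    LinearMap.range (A.map res).mulVecLin =
      LinearMap.range ((D i).map res).mulVecLin with hInvDef
  have base : Inv 0 := ⟨n 0, D 0, rfl, hinj, rfl⟩
  have step : ∀ i : ℕ, i + 1 < k → Inv i →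
      (LinearMap.range (D i).mulVecLin = LinearMap.ker (D (i + 1)).mulVecLin) ∧
        Inv (i + 1) := by
    intro i hik hInv
    obtain ⟨m, A, hA1, hA2, hA3⟩ := hInv
    obtain ⟨m', Q, ha, hb⟩ := exists_complement A
    -- D(i+1) kills range of A
    have hDA : ∀ x : Fin m → R, (D (i + 1)).mulVec (A.mulVec x) = 0 := by
      intro x
      have hx : A.mulVec x ∈ LinearMap.range (D i).mulVecLin := by
        rw [← hA1]; exact ⟨x, rfl⟩
      obtain ⟨z, hz⟩ := hx
      rw [mulVecLin_apply] at hz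
      rw [← hz, Matrix.mulVec_mulVec, hcomp i hik, Matrix.zero_mulVec]
    have hDAb : ∀ x : Fin m → κ,
        ((D (i + 1)).map res).mulVec ((A.map res).mulVec x) = 0 := by
      intro x
      have hx : (A.map res).mulVec x ∈
          LinearMap.range ((D i).map res).mulVecLin := by
        rw [← hA3]; exact ⟨x, rfl⟩
      rw [hmid i hik] at hx
      rw [LinearMap.mem_ker, mulVecLin_apply] at hx
      exact hx
    set E : Matrix (Fin (n (i + 2))) (Fin m') R := D (i + 1) * Q with hE
    have hEb : E.map res = ((D (i + 1)).map res) * (Q.map res) := by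
      rw [hE, Matrix.map_mul]
    -- reduced E injective
    have hEinj : Function.Injective (E.map res).mulVecLin := by
      rw [← LinearMap.ker_eq_bot, LinearMap.ker_eq_bot']
      intro y hy
      rw [mulVecLin_apply, hEb, ← Matrix.mulVec_mulVec] at hy
      have hQy : (Q.map res).mulVec y ∈
          LinearMap.range ((D i).map res).mulVecLin := by
        rw [hmid i hik, LinearMap.mem_ker, mulVecLin_apply]
        exact hy
      rw [← hA3] at hQy
      obtain ⟨x, hx⟩ := hQy
      rw [mulVecLin_apply] at hx
      apply hb (-x) y
      rw [Matrix.mulVec_neg, hx]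
      ring
    -- E injective over R
    have hER : ∀ y : Fin m' → R, E.mulVec y = 0 → y = 0 :=
      injective_of_residue_injective E hEinj
    -- exactness at spot i
    have hexact : LinearMap.range (D i).mulVecLin =
        LinearMap.ker (D (i + 1)).mulVecLin := by
      apply le_antisymm
      · rintro v ⟨z, hz⟩
        rw [mulVecLin_apply] at hz
        rw [LinearMap.mem_ker, mulVecLin_apply, ← hz, Matrix.mulVec_mulVec,
          hcomp i hik, Matrix.zero_mulVec]
      · intro v hv
        rw [LinearMap.mem_ker, mulVecLin_apply] at hv
        obtain ⟨x, y, hxy⟩ := ha v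
        have h0 : E.mulVec y = 0 := by
          have := congrArg (D (i + 1)).mulVec hxy
          rw [hv, Matrix.mulVec_add, hDA, zero_add, Matrix.mulVec_mulVec] at this
          exact this.symm
        have hy0 : y = 0 := hER y h0
        rw [hy0, Matrix.mulVec_zero, add_zero] at hxy
        rw [← hA1]
        exact ⟨x, by rw [mulVecLin_apply, ← hxy]⟩
    refine ⟨hexact, m', E, ?_, hEinj, ?_⟩
    · -- range E = range D (i+1)
      apply le_antisymm
      · rintro w ⟨y, hy⟩
        rw [mulVecLin_apply, hE, ← Matrix.mulVec_mulVec] at hy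
        exact ⟨Q.mulVec y, by rw [mulVecLin_apply, hy]⟩
      · rintro w ⟨v, hv⟩
        rw [mulVecLin_apply] at hv
        obtain ⟨x, y, hxy⟩ := ha v
        refine ⟨y, ?_⟩
        rw [mulVecLin_apply, hE, ← Matrix.mulVec_mulVec, ← hv, hxy,
          Matrix.mulVec_add, hDA, zero_add]
    · -- range of reduced E = range of reduced D (i+1)
      apply le_antisymm
      · rintro w ⟨y, hy⟩
        rw [mulVecLin_apply, hEb, ← Matrix.mulVec_mulVec] at hy
        exact ⟨(Q.map res).mulVec y, by rw [mulVecLin_apply, hy]⟩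
      · rintro w ⟨vb, hv⟩
        rw [mulVecLin_apply] at hv
        obtain ⟨v, rfl⟩ := exists_comp_eq IsLocalRing.residue_surjective vb
        obtain ⟨x, y, hxy⟩ := ha v
        have hR : (D (i + 1)).mulVec v = E.mulVec y := by
          rw [hxy, Matrix.mulVec_add, hDA, zero_add, Matrix.mulVec_mulVec, hE]
        refine ⟨res ∘ y, ?_⟩
        rw [mulVecLin_apply, mapMulVec res E y, ← hv, mapMulVec res (D (i + 1)) v, hR]
  have hInvAll : ∀ i : ℕ, i + 1 < k → Inv i := by
    intro i
    induction i with
    | zero => exact fun _ => base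
    | succ j ih =>
      intro h
      exact (step j (Nat.lt_of_succ_lt h) (ih (Nat.lt_of_succ_lt h))).2
  exact fun i hi => (step i hi (hInvAll i hi)).1

end LocalMain

section Global

variable {R : Type*} [CommRing R]

lemma eq_zero_of_localization_zero (r : R)
    (h : ∀ (P : Ideal R) [P.IsMaximal], algebraMap R (Localization.AtPrime P) r = 0) :
    r = 0 := by
  by_contra hr
  have hne : Ideal.torsionOf R R r ≠ ⊤ := by
    intro htop
    apply hr
    have h1 : (1 : R) ∈ Ideal.torsionOf R R r := htop ▸ Submodule.mem_top
    simpa using (Ideal.mem_torsionOf_iff r 1).mp h1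
  obtain ⟨P, hP, hIP⟩ := Ideal.exists_le_maximal _ hne
  haveI := hP
  obtain ⟨m, hm⟩ := (IsLocalization.map_eq_zero_iff P.primeCompl
    (Localization.AtPrime P) r).mp (h P)
  have hmem : (m : R) ∈ Ideal.torsionOf R R r :=
    (Ideal.mem_torsionOf_iff r (m : R)).mpr (by simpa [smul_eq_mul] using hm)
  exact m.2 (hIP hmem)

lemma mem_range_of_localization {ι₁ ι₂ : Type*} [Fintype ι₁] [Fintype ι₂]
    (M : Matrix ι₁ ι₂ R) (v : ι₁ → R)
    (h : ∀ (P : Ideal R) [P.IsMaximal],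
      (fun i => algebraMap R (Localization.AtPrime P) (v i)) ∈
        LinearMap.range (M.map (algebraMap R (Localization.AtPrime P))).mulVecLin) :
    v ∈ LinearMap.range M.mulVecLin := by
  classical
  set N := LinearMap.range M.mulVecLin with hN
  set I : Ideal R := N.comap (LinearMap.toSpanSingleton R (ι₁ → R) v) with hIdef
  have hI : ∀ s : R, s ∈ I ↔ s • v ∈ N := fun s => Iff.rfl
  have hIT : I = ⊤ := by
    by_contra hIT
    obtain ⟨P, hP, hIP⟩ := Ideal.exists_le_maximal I hIT
    haveI := hP
    obtain ⟨u, hu⟩ := h P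
    rw [mulVecLin_apply] at hu
    obtain ⟨b, hb⟩ := IsLocalization.exist_integer_multiples P.primeCompl Finset.univ u
    choose x hx using fun i => hb i (Finset.mem_univ i)
    have hax : (fun i => algebraMap R (Localization.AtPrime P) (x i)) =
        fun i => algebraMap R (Localization.AtPrime P) (b : R) * u i := by
      funext i
      rw [hx i]
      exact Algebra.smul_def _ _
    -- componentwise equation over the localization
    have hcomp : ∀ i, algebraMap R (Localization.AtPrime P) ((M.mulVec x) i) =
        algebraMap R (Localization.AtPrime P) ((b : R) * v i) := by
      have h1 : (algebraMap R (Localization.AtPrime P)) ∘ (M.mulVec x) =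
          fun i => (algebraMap R (Localization.AtPrime P)) ((b : R) * v i) := by
        rw [← mapMulVec]
        have hcx : (algebraMap R (Localization.AtPrime P)) ∘ x =
            (algebraMap R (Localization.AtPrime P)) ((b : R)) • u := by
          funext j
          rw [Function.comp_apply, hx j]
          exact Algebra.smul_def _ _
        rw [hcx, Matrix.mulVec_smul, hu]
        funext i'
        simp [Pi.smul_apply, smul_eq_mul, _root_.map_mul]
      exact fun i => congrFun h1 i
    choose c hc using fun i => (IsLocalization.map_eq_zero_iff P.primeCompl
      (Localization.AtPrime P) ((M.mulVec x) i - (b : R) * v i)).mp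
        (by rw [map_sub, hcomp i, sub_self])
    set t : R := ∏ i, (c i : R) with ht
    have htmem : t ∈ P.primeCompl := Submonoid.prod_mem _ (fun i _ => (c i).2)
    have hzero : ∀ i, t * ((M.mulVec x) i - (b : R) * v i) = 0 := by
      intro i
      rw [ht, ← Finset.prod_erase_mul Finset.univ _ (Finset.mem_univ i), mul_assoc,
        hc i, mul_zero]
    have hmem : (t * (b : R)) • v ∈ N := by
      refine ⟨t • x, ?_⟩
      rw [mulVecLin_apply, Matrix.mulVec_smul]
      funext i
      have h0 := hzero i
      rw [mul_sub, sub_eq_zero] at h0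
      simp only [Pi.smul_apply, smul_eq_mul]
      rw [h0, mul_assoc]
    have : t * (b : R) ∈ I := (hI _).mpr hmem
    exact (mul_mem htmem b.2) (hIP this)
  have h1 : (1 : R) ∈ I := hIT ▸ Submodule.mem_top
  simpa using (hI 1).mp h1

/-- comparison of the residue field of the localization with `R ⧸ P` -/
noncomputable def resCompare (P : Ideal R) [P.IsMaximal] :
    (R ⧸ P) →+* IsLocalRing.ResidueField (Localization.AtPrime P) :=
  Ideal.Quotient.lift P ((IsLocalRing.residue (Localization.AtPrime P)).comp
    (algebraMap R (Localization.AtPrime P))) (fun a ha => by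
      have hmem : algebraMap R (Localization.AtPrime P) a ∈
          IsLocalRing.maximalIdeal (Localization.AtPrime P) :=
        (IsLocalization.AtPrime.to_map_mem_maximal_iff (Localization.AtPrime P) P a).mpr ha
      exact Ideal.Quotient.eq_zero_iff_mem.mpr hmem)

lemma resCompare_mk (P : Ideal R) [P.IsMaximal] (r : R) :
    resCompare P (Ideal.Quotient.mk P r) =
      IsLocalRing.residue (Localization.AtPrime P) (algebraMap R (Localization.AtPrime P) r) :=
  Ideal.Quotient.lift_mk _ _ _

lemma resCompare_bijective (P : Ideal R) [P.IsMaximal] :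
    Function.Bijective (resCompare P) := by
  letI := Ideal.Quotient.field P
  constructor
  · exact RingHom.injective _
  · intro z
    obtain ⟨w, rfl⟩ := IsLocalRing.residue_surjective z
    obtain ⟨⟨r, s⟩, hrs⟩ := IsLocalization.mk'_surjective P.primeCompl w
    dsimp only at hrs
    have hsu : IsUnit (algebraMap R (Localization.AtPrime P) (s : R)) :=
      IsLocalization.map_units _ s
    have hne : resCompare P (Ideal.Quotient.mk P (s : R)) ≠ 0 := by
      rw [resCompare_mk]
      exact (hsu.map (IsLocalRing.residue (Localization.AtPrime P))).ne_zero
    have hws : IsLocalRing.residue (Localization.AtPrime P) w *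
        resCompare P (Ideal.Quotient.mk P (s : R)) =
        resCompare P (Ideal.Quotient.mk P r) := by
      rw [resCompare_mk, resCompare_mk, ← _root_.map_mul, ← hrs, IsLocalization.mk'_spec]
    refine ⟨Ideal.Quotient.mk P r / Ideal.Quotient.mk P (s : R), ?_⟩
    rw [map_div₀, div_eq_iff hne, ← hws, mul_comm]

lemma matrix_reduction_compat (P : Ideal R) [P.IsMaximal] {ι₁ ι₂ : Type*}
    (M : Matrix ι₁ ι₂ R) :
    (M.map (algebraMap R (Localization.AtPrime P))).map
        (IsLocalRing.residue (Localization.AtPrime P)) =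
      (M.map (Ideal.Quotient.mk P)).map (resCompare P) := by
  rw [Matrix.map_map, Matrix.map_map]
  congr 1

end Global

theorem acyclic_of_pointwise_acyclic (R : Type*) [CommRing R] [IsNoetherianRing R]
    (k : ℕ) (hk : 1 ≤ k) (n : ℕ → ℕ)
    (D : ∀ i : ℕ, Matrix (Fin (n (i + 1))) (Fin (n i)) R)
    (hcomp : ∀ i : ℕ, i + 1 < k → D (i + 1) * D i = 0)
    (hpt : ∀ 𝔪 : Ideal R, 𝔪.IsMaximal →
      Function.Injective (Matrix.mulVecLin ((D 0).map (Ideal.Quotient.mk 𝔪))) ∧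
      (∀ i : ℕ, i + 1 < k →
        LinearMap.range (Matrix.mulVecLin ((D i).map (Ideal.Quotient.mk 𝔪))) =
          LinearMap.ker (Matrix.mulVecLin ((D (i + 1)).map (Ideal.Quotient.mk 𝔪)))) ∧
      Function.Surjective (Matrix.mulVecLin ((D (k - 1)).map (Ideal.Quotient.mk 𝔪)))) :
    Function.Injective (Matrix.mulVecLin (D 0)) ∧
      (∀ i : ℕ, i + 1 < k →
        LinearMap.range (Matrix.mulVecLin (D i)) =
          LinearMap.ker (Matrix.mulVecLin (D (i + 1)))) ∧
      Function.Surjective (Matrix.mulVecLin (D (k - 1))) := by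
  classical
  have hloc : ∀ (P : Ideal R) [P.IsMaximal],
      Function.Injective ((D 0).map (algebraMap R (Localization.AtPrime P))).mulVecLin ∧
      (∀ i : ℕ, i + 1 < k →
        LinearMap.range ((D i).map (algebraMap R (Localization.AtPrime P))).mulVecLin =
          LinearMap.ker ((D (i + 1)).map
            (algebraMap R (Localization.AtPrime P))).mulVecLin) ∧
      Function.Surjective ((D (k - 1)).map
        (algebraMap R (Localization.AtPrime P))).mulVecLin := by
    intro P hP
    obtain ⟨hp1, hp2, hp3⟩ := hpt P hP
    have hφ := resCompare_bijective P
    refine local_acyclic k hk n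
      (fun i => (D i).map (algebraMap R (Localization.AtPrime P))) ?_ ?_ ?_ ?_
    · intro i hik
      show (D (i + 1)).map _ * (D i).map _ = 0
      rw [← Matrix.map_mul, hcomp i hik]
      exact Matrix.map_zero _ (map_zero _)
    · show Function.Injective (((D 0).map (algebraMap R (Localization.AtPrime P))).map
        (IsLocalRing.residue (Localization.AtPrime P))).mulVecLin
      rw [matrix_reduction_compat]
      exact injective_map_of_bijective hφ hp1
    · intro i hik
      show LinearMap.range (((D i).map (algebraMap R (Localization.AtPrime P))).map
          (IsLocalRing.residue (Localization.AtPrime P))).mulVecLin =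
        LinearMap.ker (((D (i + 1)).map (algebraMap R (Localization.AtPrime P))).map
          (IsLocalRing.residue (Localization.AtPrime P))).mulVecLin
      rw [matrix_reduction_compat, matrix_reduction_compat]
      exact range_eq_ker_map_of_bijective hφ (hp2 i hik)
    · show Function.Surjective (((D (k - 1)).map (algebraMap R (Localization.AtPrime P))).map
        (IsLocalRing.residue (Localization.AtPrime P))).mulVecLin
      rw [matrix_reduction_compat]
      exact surjective_map_of_bijective hφ hp3
  refine ⟨?_, ?_, ?_⟩
  · -- injectivity over R
    rw [← LinearMap.ker_eq_bot, LinearMap.ker_eq_bot']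
    intro x hx
    rw [mulVecLin_apply] at hx
    funext j
    apply eq_zero_of_localization_zero
    intro P hP
    haveI := hP
    have h1 : ((D 0).map (algebraMap R (Localization.AtPrime P))).mulVecLin
        ((algebraMap R (Localization.AtPrime P)) ∘ x) = 0 := by
      rw [mulVecLin_apply, mapMulVec, hx]
      funext i
      simp
    have h2 : (algebraMap R (Localization.AtPrime P)) ∘ x = 0 :=
      (hloc P).1 (by rw [h1, map_zero])
    exact congrFun h2 j
  · -- middle exactness over R
    intro i hik
    apply le_antisymm
    · rintro v ⟨z, hz⟩
      rw [mulVecLin_apply] at hz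
      rw [LinearMap.mem_ker, mulVecLin_apply, ← hz, Matrix.mulVec_mulVec, hcomp i hik,
        Matrix.zero_mulVec]
    · intro v hv
      rw [LinearMap.mem_ker, mulVecLin_apply] at hv
      apply mem_range_of_localization
      intro P hP
      haveI := hP
      rw [(hloc P).2.1 i hik, LinearMap.mem_ker, mulVecLin_apply]
      show ((D (i + 1)).map (algebraMap R (Localization.AtPrime P))) *ᵥ
        ((algebraMap R (Localization.AtPrime P)) ∘ v) = 0
      rw [mapMulVec, hv]
      funext i'
      simp
  · -- surjectivity over R
    intro w
    have hm : w ∈ LinearMap.range (D (k - 1)).mulVecLin := by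
      apply mem_range_of_localization
      intro P hP
      haveI := hP
      exact (hloc P).2.2 (fun i => algebraMap R (Localization.AtPrime P) (w i))
    exact hm
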